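/- Fix e ∈ [0,1) and θ with 1 + e cos θ > 0, let β₀ = arccos(1/√3), and define Ψ₂(β) = −2 cos β sin β − (1 − 3cos²β)·Γ on [β₀, π − β₀], where Γ = e sin θ/(1 + e cos θ). Then Ψ₂ has exactly one zero in (β₀, π − β₀). -/

import Mathlib

open Real Set
set_option maxHeartbeats 1000000

theorem stmt_11 (e θ : ℝ) (he : e ∈ Ico (0 : ℝ) 1) (hden : 0 < 1 + e * cos θ) :
    ∃! β : ℝ, β ∈ Ioo (arccos (1 / Real.sqrt 3)) (π - arccos (1 / Real.sqrt 3)) ∧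
      -2 * cos β * sin β
        - (1 - 3 * (cos β) ^ 2) * (e * sin θ / (1 + e * cos θ)) = 0 := by
  set Γ : ℝ := e * sin θ / (1 + e * cos θ) with hΓ
  set b0 : ℝ := arccos (1 / Real.sqrt 3) with hb0
  have hs3 : (1:ℝ) < Real.sqrt 3 := by
    have : (1:ℝ) = Real.sqrt 1 := (Real.sqrt_one).symm
    rw [this]; exact Real.sqrt_lt_sqrt (by norm_num) (by norm_num)
  have hs3pos : (0:ℝ) < Real.sqrt 3 := by linarith
  have hx1 : (0:ℝ) < 1 / Real.sqrt 3 := by positivity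
  have hx2 : (1:ℝ) / Real.sqrt 3 < 1 := by
    rw [div_lt_one hs3pos]; exact hs3
  have hcosb0 : Real.cos b0 = 1 / Real.sqrt 3 :=
    Real.cos_arccos (by linarith) (by linarith)
  have hsq : (1 / Real.sqrt 3) ^ 2 = 1 / 3 := by
    rw [div_pow, one_pow, Real.sq_sqrt (by norm_num : (3:ℝ) ≥ 0)]
  have hb0pos : 0 < b0 := Real.arccos_pos.2 hx2
  have hb0lt : b0 < π / 2 := by
    have := Real.arccos_lt_pi_div_two (x := 1 / Real.sqrt 3)
    rw [this]; exact hx1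
  have hb0lepi : b0 ≤ π := Real.arccos_le_pi _
  have hsinb0 : 0 < Real.sin b0 :=
    Real.sin_pos_of_pos_of_lt_pi hb0pos (by linarith [Real.pi_pos])
  have hlt : b0 < π - b0 := by linarith
  -- denominator positivity on the open interval
  have hD : ∀ x ∈ Ioo b0 (π - b0), 0 < 1 - 3 * Real.cos x ^ 2 := by
    intro x hx
    have hx1' : Real.cos x < Real.cos b0 :=
      Real.cos_lt_cos_of_nonneg_of_le_pi (le_of_lt hb0pos) (by linarith [hx.2]) hx.1
    have hx2' : Real.cos (π - b0) < Real.cos x :=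
      Real.cos_lt_cos_of_nonneg_of_le_pi (by linarith [hx.1]) (by linarith) hx.2
    rw [Real.cos_pi_sub, hcosb0] at hx2'
    rw [hcosb0] at hx1'
    have : Real.cos x ^ 2 < (1 / Real.sqrt 3) ^ 2 := by
      have habs : |Real.cos x| < 1 / Real.sqrt 3 := abs_lt.2 ⟨hx2', hx1'⟩
      calc Real.cos x ^ 2 = |Real.cos x| ^ 2 := (sq_abs _).symm
        _ < (1 / Real.sqrt 3) ^ 2 := by
            exact pow_lt_pow_left₀ habs (abs_nonneg _) (by norm_num)
    rw [hsq] at this; linarith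
  -- the rational function h
  set h : ℝ → ℝ := fun x => (-2 * Real.cos x * Real.sin x) / (1 - 3 * Real.cos x ^ 2)
    with hh
  -- h is strictly monotone on Ioo
  have hmono : StrictMonoOn h (Ioo b0 (π - b0)) := by
    apply strictMonoOn_of_deriv_pos (convex_Ioo _ _)
    · apply ContinuousOn.div
      · exact Continuous.continuousOn (by continuity)
      · exact Continuous.continuousOn (by continuity)
      · intro x hx; exact ne_of_gt (hD x hx)
    · intro x hx
      rw [interior_Ioo] at hx
      have hDx : (1 - 3 * Real.cos x ^ 2) ≠ 0 := ne_of_gt (hD x hx)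
      have hn : HasDerivAt (fun x => -2 * Real.cos x * Real.sin x)
          (2 * Real.sin x ^ 2 - 2 * Real.cos x ^ 2) x := by
        have := (((Real.hasDerivAt_cos x).const_mul (-2 : ℝ)).mul
          (Real.hasDerivAt_sin x))
        exact this.congr_deriv (by ring)
      have hd : HasDerivAt (fun x => 1 - 3 * Real.cos x ^ 2)
          (6 * Real.cos x * Real.sin x) x := by
        have h1 := (Real.hasDerivAt_cos x).pow 2
        have h2 := (h1.const_mul (3:ℝ)).const_sub 1
        exact h2.congr_deriv (by ring)
      have hdiv := hn.div hd hDx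
      rw [show deriv h x = _ from hdiv.deriv]
      have hkey : (2 * Real.sin x ^ 2 - 2 * Real.cos x ^ 2) * (1 - 3 * Real.cos x ^ 2)
          - (-2 * Real.cos x * Real.sin x) * (6 * Real.cos x * Real.sin x)
          = 2 + 2 * Real.cos x ^ 2 := by
        nlinarith [Real.sin_sq_add_cos_sq x]
      rw [hkey]
      positivity
  -- existence via IVT
  set Ψ : ℝ → ℝ := fun β => -2 * Real.cos β * Real.sin β
    - (1 - 3 * Real.cos β ^ 2) * Γ with hΨ
  have hΨcont : ContinuousOn Ψ (Icc b0 (π - b0)) :=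
    Continuous.continuousOn (by continuity)
  have hΨa : Ψ b0 < 0 := by
    simp only [hΨ, hcosb0, hsq]
    have h1 : ((1:ℝ) - 3 * (1/3)) * Γ = 0 := by norm_num
    rw [h1]
    have : -2 * (1 / Real.sqrt 3) * Real.sin b0 < 0 := by
      have : 0 < 2 * (1 / Real.sqrt 3) * Real.sin b0 := by positivity
      linarith
    linarith
  have hΨb : 0 < Ψ (π - b0) := by
    simp only [hΨ, Real.cos_pi_sub, Real.sin_pi_sub, hcosb0]
    have h1 : (1:ℝ) - 3 * (-(1 / Real.sqrt 3)) ^ 2 = 0 := by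
      rw [neg_pow]; rw [hsq]; norm_num
    rw [h1]
    have : 0 < 2 * (1 / Real.sqrt 3) * Real.sin b0 := by positivity
    linarith
  have hmem : (0:ℝ) ∈ Ioo (Ψ b0) (Ψ (π - b0)) := ⟨hΨa, hΨb⟩
  obtain ⟨c, hc, hfc⟩ := intermediate_value_Ioo (le_of_lt hlt) hΨcont hmem
  -- zeros of Ψ in Ioo are points where h = Γ
  have hzero : ∀ x ∈ Ioo b0 (π - b0), Ψ x = 0 → h x = Γ := by
    intro x hx hx0
    have hDx := hD x hx
    have : -2 * Real.cos x * Real.sin x = (1 - 3 * Real.cos x ^ 2) * Γ := by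
      simp only [hΨ] at hx0; linarith
    rw [hh]
    dsimp only
    rw [div_eq_iff (ne_of_gt hDx), this]
    ring
  refine ⟨c, ⟨hc, hfc⟩, ?_⟩
  intro y ⟨hy, hy0⟩
  exact hmono.injOn hy hc (by rw [hzero y hy hy0, hzero c hc hfc])
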